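/- For the Cobb–Douglas production function F(l₁,l₂) = C l₁^{α₁/(α₁+α₂+1)} l₂^{α₂/(α₁+α₂+1)} with C > 0, α₁ ≥ 1, α₂ ≥ 1, the profit function Π(p₁,p₂,p₀) = sup_{l ≥ 0}(p₀ F(l) - p·l) equals A·(B(α₁,α₂)/((α₁+α₂)(α₁+α₂+1))) · p₀^{α₁+α₂+1} p₁^{-α₁} p₂^{-α₂}, where A = C^{α₁+α₂+1} ((α₁+α₂) α₁^{α₁} α₂^{α₂}/(α₁+α₂+1)^{α₁+α₂}) / B(α₁,α₂) and B is the beta function. -/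

import Mathlib

noncomputable def realBeta (a b : ℝ) : ℝ := Real.Gamma a * Real.Gamma b / Real.Gamma (a + b)

/-- Profit function of the Cobb–Douglas production function
`F(l₁,l₂) = C l₁^{α₁/(α₁+α₂+1)} l₂^{α₂/(α₁+α₂+1)}`. -/
theorem cobb_douglas_profit
    (C α₁ α₂ : ℝ) (hC : 0 < C) (hα₁ : 1 ≤ α₁) (hα₂ : 1 ≤ α₂)
    (A : ℝ)
    (hA : A = C ^ (α₁ + α₂ + 1) *
      ((α₁ + α₂) * α₁ ^ α₁ * α₂ ^ α₂ / (α₁ + α₂ + 1) ^ (α₁ + α₂)) / realBeta α₁ α₂)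
    (p₁ p₂ p₀ : ℝ) (hp₁ : 0 < p₁) (hp₂ : 0 < p₂) (hp₀ : 0 < p₀) :
    IsLUB {z : ℝ | ∃ l₁ l₂ : ℝ, 0 ≤ l₁ ∧ 0 ≤ l₂ ∧
        z = p₀ * (C * l₁ ^ (α₁ / (α₁ + α₂ + 1)) * l₂ ^ (α₂ / (α₁ + α₂ + 1)))
              - p₁ * l₁ - p₂ * l₂}
      (A * (realBeta α₁ α₂ / ((α₁ + α₂) * (α₁ + α₂ + 1))) *
        p₀ ^ (α₁ + α₂ + 1) * p₁ ^ (-α₁) * p₂ ^ (-α₂)) := by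
  have hα₁0 : 0 < α₁ := lt_of_lt_of_le one_pos hα₁
  have hα₂0 : 0 < α₂ := lt_of_lt_of_le one_pos hα₂
  set s : ℝ := α₁ + α₂ + 1 with hs
  have hs0 : 0 < s := by positivity
  have hsne : s ≠ 0 := hs0.ne'
  set a : ℝ := α₁ / s with ha
  set b : ℝ := α₂ / s with hb
  have ha0 : 0 < a := div_pos hα₁0 hs0
  have hb0 : 0 < b := div_pos hα₂0 hs0
  have hab1 : a + b + 1 / s = 1 := by rw [ha, hb]; field_simp; exact hs.symm
  set K : ℝ := p₀ * C * (α₁ / (s * p₁)) ^ a * (α₂ / (s * p₂)) ^ b with hK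
  have hK0 : 0 < K := by positivity
  -- value of K ^ s
  have h1 : ∀ x p : ℝ, 0 < x → 0 < p →
      ((x / (s * p)) ^ (x / s)) ^ s = x ^ x * ((s ^ x)⁻¹ * (p ^ x)⁻¹) := by
    intro x p hx hp
    rw [← Real.rpow_mul (by positivity), div_mul_cancel₀ _ hsne,
        Real.div_rpow hx.le (by positivity), Real.mul_rpow hs0.le hp.le,
        div_eq_mul_inv, mul_inv]
  have hKs : K ^ s = C ^ s * p₀ ^ s * α₁ ^ α₁ * α₂ ^ α₂ *
      (s ^ α₁)⁻¹ * (s ^ α₂)⁻¹ * (p₁ ^ α₁)⁻¹ * (p₂ ^ α₂)⁻¹ := by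
    rw [hK, Real.mul_rpow (by positivity) (by positivity),
        Real.mul_rpow (by positivity) (by positivity),
        Real.mul_rpow hp₀.le hC.le, ha, hb, h1 α₁ p₁ hα₁0 hp₁, h1 α₂ p₂ hα₂0 hp₂]
    ring
  -- Beta positive
  have hB0 : 0 < realBeta α₁ α₂ := by
    unfold realBeta
    have := Real.Gamma_pos_of_pos hα₁0
    have := Real.Gamma_pos_of_pos hα₂0
    have := Real.Gamma_pos_of_pos (show (0:ℝ) < α₁ + α₂ by positivity)
    positivity
  -- target equals K ^ s / s
  have hT : A * (realBeta α₁ α₂ / ((α₁ + α₂) * s)) * p₀ ^ s * p₁ ^ (-α₁) * p₂ ^ (-α₂)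
      = K ^ s / s := by
    rw [hA, hKs, Real.rpow_neg hp₁.le, Real.rpow_neg hp₂.le, Real.rpow_add hs0]
    have h2 : (0:ℝ) < α₁ + α₂ := by positivity
    field_simp
  rw [hT]
  constructor
  · -- upper bound
    rintro z ⟨l₁, l₂, hl1, hl2, rfl⟩
    rcases eq_or_lt_of_le hl1 with h1' | h1'
    · rw [← h1', Real.zero_rpow ha0.ne']
      have h3 : (0:ℝ) < K ^ s / s := by positivity
      nlinarith [mul_nonneg hp₂.le hl2]
    rcases eq_or_lt_of_le hl2 with h2' | h2'
    · rw [← h2', Real.zero_rpow hb0.ne']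
      have h3 : (0:ℝ) < K ^ s / s := by positivity
      nlinarith [mul_nonneg hp₁.le hl1]
    have key := Real.geom_mean_le_arith_mean3_weighted ha0.le hb0.le
      (by positivity : (0:ℝ) ≤ 1 / s)
      (by positivity : (0:ℝ) ≤ p₁ * l₁ / a) (by positivity : (0:ℝ) ≤ p₂ * l₂ / b)
      (by positivity : (0:ℝ) ≤ K ^ s) hab1
    have e1 : (p₁ * l₁ / a) ^ a * (α₁ / (s * p₁)) ^ a = l₁ ^ a := by
      rw [← Real.mul_rpow (by positivity) (by positivity)]
      congr 1
      rw [ha]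
      field_simp
    have e2 : (p₂ * l₂ / b) ^ b * (α₂ / (s * p₂)) ^ b = l₂ ^ b := by
      rw [← Real.mul_rpow (by positivity) (by positivity)]
      congr 1
      rw [hb]
      field_simp
    have hroot : (K ^ s) ^ (1 / s) = K := by
      rw [← Real.rpow_mul hK0.le, mul_one_div, div_self hsne, Real.rpow_one]
    have hlhs : (p₁ * l₁ / a) ^ a * (p₂ * l₂ / b) ^ b * (K ^ s) ^ (1 / s)
        = p₀ * (C * l₁ ^ a * l₂ ^ b) := by
      rw [hroot, hK, ← e1, ← e2]; ring
    rw [hlhs] at key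
    have e3 : a * (p₁ * l₁ / a) = p₁ * l₁ := by field_simp
    have e4 : b * (p₂ * l₂ / b) = p₂ * l₂ := by field_simp
    rw [e3, e4] at key
    have : 1 / s * K ^ s = K ^ s / s := by ring
    linarith [key]
  · -- least upper bound: the value is attained
    intro u hu
    refine hu ⟨α₁ * K ^ s / (s * p₁), α₂ * K ^ s / (s * p₂), by positivity, by positivity, ?_⟩
    have hpow : (K ^ s) ^ a * (K ^ s) ^ b = K ^ (s - 1) := by
      rw [← Real.rpow_add (by positivity), ← Real.rpow_mul hK0.le]
      congr 1
      rw [ha, hb, hs]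
      field_simp
      ring
    have hKsplit : K ^ s = K * K ^ (s - 1) := by
      nth_rewrite 1 [show s = 1 + (s - 1) from by ring]
      rw [Real.rpow_add hK0, Real.rpow_one]
    have hval : p₀ * (C * (α₁ * K ^ s / (s * p₁)) ^ a * (α₂ * K ^ s / (s * p₂)) ^ b)
        = K ^ s := by
      have ea : (α₁ / (s * p₁) * K ^ s) ^ a = (α₁ / (s * p₁)) ^ a * (K ^ s) ^ a :=
        Real.mul_rpow (by positivity) (by positivity)
      have eb : (α₂ / (s * p₂) * K ^ s) ^ b = (α₂ / (s * p₂)) ^ b * (K ^ s) ^ b :=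
        Real.mul_rpow (by positivity) (by positivity)
      rw [show α₁ * K ^ s / (s * p₁) = α₁ / (s * p₁) * K ^ s from by ring,
          show α₂ * K ^ s / (s * p₂) = α₂ / (s * p₂) * K ^ s from by ring, ea, eb]
      calc p₀ * (C * ((α₁ / (s * p₁)) ^ a * (K ^ s) ^ a) *
              ((α₂ / (s * p₂)) ^ b * (K ^ s) ^ b))
          = (p₀ * C * (α₁ / (s * p₁)) ^ a * (α₂ / (s * p₂)) ^ b) *
              ((K ^ s) ^ a * (K ^ s) ^ b) := by ring
        _ = K * K ^ (s - 1) := by rw [hpow, ← hK]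
        _ = K ^ s := hKsplit.symm
    rw [hval]
    field_simp
    rw [hs]
    ring
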